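/- On a finite weighted graph with symmetric weights, for any vertex function u : V -> R, the supremum of <div_w phi, u>_V over edge functions phi with sup-norm at most 1 equals (1/2) sum_{x,y in V} w(x,y)^q |u(y) - u(x)|. -/

import Mathlib

/-- The graph divergence operator
`(div_w φ)(x) = (1/(2 d(x)^r)) ∑_y w(x,y)^q (φ(x,y) - φ(y,x))`. -/
noncomputable def graphDiv {V : Type*} [Fintype V] (w : V → V → ℝ) (d : V → ℝ)
    (r q : ℝ) (φ : V → V → ℝ) (x : V) : ℝ :=
  (1 / (2 * d x ^ r)) * ∑ y, w x y ^ q * (φ x y - φ y x)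

lemma key_inner {V : Type*} [Fintype V]
    (w : V → V → ℝ) (d : V → ℝ) (r q : ℝ)
    (hsymm : ∀ x y, w x y = w y x) (hd : ∀ x, 0 < d x) (u : V → ℝ) (φ : V → V → ℝ) :
    ∑ x, graphDiv w d r q φ x * u x * d x ^ r
      = (1 / 2) * ∑ x, ∑ y, w x y ^ q * φ x y * (u x - u y) := by
  have hdx : ∀ x, (d x : ℝ) ^ r ≠ 0 := fun x => (Real.rpow_pos_of_pos (hd x) r).ne'
  have h1 : ∑ x, graphDiv w d r q φ x * u x * d x ^ r
      = (1 / 2) * ∑ x, ∑ y, w x y ^ q * (φ x y - φ y x) * u x := by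
    rw [Finset.mul_sum]
    refine Finset.sum_congr rfl fun x _ => ?_
    rw [graphDiv, ← Finset.sum_mul]
    field_simp
    rw [mul_assoc]
    exact mul_div_cancel_left₀ _ (hdx x)
  rw [h1]
  congr 1
  have h2 : ∑ x, ∑ y, w x y ^ q * φ y x * u x
      = ∑ x, ∑ y, w x y ^ q * φ x y * u y := by
    rw [Finset.sum_comm]
    refine Finset.sum_congr rfl fun x _ => Finset.sum_congr rfl fun y _ => ?_
    rw [hsymm]
  calc ∑ x, ∑ y, w x y ^ q * (φ x y - φ y x) * u x
      = (∑ x, ∑ y, w x y ^ q * φ x y * u x) - ∑ x, ∑ y, w x y ^ q * φ y x * u x := by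
        rw [← Finset.sum_sub_distrib]
        refine Finset.sum_congr rfl fun x _ => ?_
        rw [← Finset.sum_sub_distrib]
        exact Finset.sum_congr rfl fun y _ => by ring
    _ = ∑ x, ∑ y, w x y ^ q * φ x y * (u x - u y) := by
        rw [h2, ← Finset.sum_sub_distrib]
        refine Finset.sum_congr rfl fun x _ => ?_
        rw [← Finset.sum_sub_distrib]
        exact Finset.sum_congr rfl fun y _ => by ring

/-- for any vertex function `u`, the supremum of
`⟨div_w φ, u⟩_V = ∑_x (div_w φ)(x) u(x) d(x)^r` over edge functions `φ` with
sup-norm at most `1` equals `(1/2) ∑_{x,y} w(x,y)^q |u(y) - u(x)|`. -/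
theorem TV_sup_formula {V : Type*} [Fintype V]
    (w : V → V → ℝ) (d : V → ℝ) (r q : ℝ)
    (hr : r ∈ Set.Icc (0 : ℝ) 1) (hq : q ∈ Set.Icc (1 / 2 : ℝ) 1)
    (hsymm : ∀ x y, w x y = w y x) (hnonneg : ∀ x y, 0 ≤ w x y)
    (hd : ∀ x, 0 < d x) (u : V → ℝ) :
    IsGreatest {v : ℝ | ∃ φ : V → V → ℝ, (∀ x y, |φ x y| ≤ 1) ∧
        v = ∑ x, graphDiv w d r q φ x * u x * d x ^ r}
      ((1 / 2) * ∑ x, ∑ y, w x y ^ q * |u y - u x|) := by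
  constructor
  · refine ⟨fun x y => if u x ≤ u y then (-1 : ℝ) else 1, fun x y => ?_, ?_⟩
    · by_cases h : u x ≤ u y <;> simp [h]
    · rw [key_inner w d r q hsymm hd]
      congr 1
      refine Finset.sum_congr rfl fun x _ => Finset.sum_congr rfl fun y _ => ?_
      by_cases h : u x ≤ u y
      · simp only [h, if_pos]
        rw [abs_of_nonneg (by linarith)]
        ring
      · simp only [h, if_neg, not_false_iff]
        rw [abs_of_nonpos (by linarith)]
        ring
  · rintro v ⟨φ, hφ, rfl⟩
    rw [key_inner w d r q hsymm hd]
    have h12 : (0:ℝ) ≤ 1/2 := by norm_num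
    refine mul_le_mul_of_nonneg_left ?_ h12
    refine Finset.sum_le_sum fun x _ => Finset.sum_le_sum fun y _ => ?_
    have hw : (0:ℝ) ≤ w x y ^ q := Real.rpow_nonneg (hnonneg x y) q
    calc w x y ^ q * φ x y * (u x - u y)
        ≤ |w x y ^ q * φ x y * (u x - u y)| := le_abs_self _
      _ = w x y ^ q * |φ x y| * |u x - u y| := by
          rw [abs_mul, abs_mul, abs_of_nonneg hw]
      _ ≤ w x y ^ q * 1 * |u x - u y| := by
          apply mul_le_mul_of_nonneg_right (mul_le_mul_of_nonneg_left (hφ x y) hw) (abs_nonneg _)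
      _ = w x y ^ q * |u y - u x| := by rw [mul_one, abs_sub_comm]
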